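/- Let (e_n)_{n≥1} be an orthonormal basis of H, x_n = Σ_{k=1}^n (1/k) e_k, y_n = n e_n − (n+1) e_{n+1}, and let G = span{e_n}. Then (x_n) and (y_n) are G-quasi bases: for all f, g ∈ G, ⟨f, g⟩ = Σ_{n=1}^∞ ⟨f, x_n⟩⟨y_n, g⟩ = Σ_{n=1}^∞ ⟨f, y_n⟩⟨x_n, g⟩ (both series converge). -/

import Mathlib

open scoped InnerProductSpace
open Filter Topology

private lemma key5 (i j : ℕ) :
    HasSum (fun n : ℕ => (if i ≤ n then ((i:ℂ)+1)⁻¹ else 0) *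
      (((n:ℂ)+1) * (if n = j then 1 else 0) - ((n:ℂ)+2) * (if n+1 = j then 1 else 0)))
      (if i = j then 1 else 0) := by
  have hz : ∀ n ∉ Finset.range (j+1),
      (if i ≤ n then ((i:ℂ)+1)⁻¹ else 0) *
      (((n:ℂ)+1) * (if n = j then 1 else 0) - ((n:ℂ)+2) * (if n+1 = j then 1 else 0)) = 0 := by
    intro n hn
    rw [Finset.mem_range, not_lt] at hn
    have h1 : n ≠ j := by omega
    have h2 : n + 1 ≠ j := by omega
    simp [h1, h2]
  have h := hasSum_sum_of_ne_finset_zero (L := SummationFilter.unconditional ℕ) hz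
  have hs : ∑ n ∈ Finset.range (j+1),
      (if i ≤ n then ((i:ℂ)+1)⁻¹ else 0) *
      (((n:ℂ)+1) * (if n = j then 1 else 0) - ((n:ℂ)+2) * (if n+1 = j then 1 else 0))
      = (if i = j then 1 else 0) := by
    cases j with
    | zero =>
      rcases Nat.eq_zero_or_pos i with h0 | h0
      · subst h0; simp [Finset.sum_range_one]
      · have h1 : ¬ i ≤ 0 := by omega
        have h2 : i ≠ 0 := by omega
        simp [Finset.sum_range_one, h1, h2]
    | succ k =>
      have : ∀ n ∈ Finset.range (k+2),
          (if i ≤ n then ((i:ℂ)+1)⁻¹ else 0) *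
          (((n:ℂ)+1) * (if n = k+1 then 1 else 0) - ((n:ℂ)+2) * (if n+1 = k+1 then 1 else 0))
          = (if n = k+1 then (if i ≤ n then ((i:ℂ)+1)⁻¹ else 0) * ((n:ℂ)+1) else 0)
            - (if n = k then (if i ≤ n then ((i:ℂ)+1)⁻¹ else 0) * ((n:ℂ)+2) else 0) := by
        intro n _
        simp only [show n + 1 = k + 1 ↔ n = k from by omega]
        by_cases h1 : n = k+1 <;> by_cases h2 : n = k <;> simp [h1, h2] <;> split_ifs <;> ring
      rw [Finset.sum_congr rfl this, Finset.sum_sub_distrib,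
        Finset.sum_ite_eq' (Finset.range (k+2)) (k+1),
        Finset.sum_ite_eq' (Finset.range (k+2)) k]
      have hk1 : k+1 ∈ Finset.range (k+2) := by simp
      have hk : k ∈ Finset.range (k+2) := by simp
      rw [if_pos hk1, if_pos hk]
      rcases lt_trichotomy i (k+1) with hlt | heq | hgt
      · have h1 : i ≤ k + 1 := by omega
        have h2 : i ≤ k := by omega
        have h3 : i ≠ k + 1 := by omega
        simp [h1, h2, h3]
        ring
      · subst heq
        have h2 : ¬ (k + 1 ≤ k) := by omega
        have hne : ((k:ℂ)+1+1) ≠ 0 := by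
          exact_mod_cast Nat.cast_add_one_ne_zero (R := ℂ) (k+1)
        simp [h2]
        push_cast
        field_simp
      · have h1 : ¬ i ≤ k + 1 := by omega
        have h2 : ¬ i ≤ k := by omega
        have h3 : i ≠ k + 1 := by omega
        simp [h1, h2, h3]
  rwa [hs] at h

theorem stmt5 {H : Type*} [NormedAddCommGroup H] [InnerProductSpace ℂ H] [CompleteSpace H]
    (b : HilbertBasis ℕ ℂ H) (x y : ℕ → H)
    (hx : ∀ n, x n = ∑ k ∈ Finset.range (n + 1), ((k : ℂ) + 1)⁻¹ • b k)
    (hy : ∀ n, y n = ((n : ℂ) + 1) • b n - ((n : ℂ) + 2) • b (n + 1)) :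
    ∀ f ∈ Submodule.span ℂ (Set.range fun n => b n),
      ∀ g ∈ Submodule.span ℂ (Set.range fun n => b n),
        HasSum (fun n => ⟪f, x n⟫_ℂ * ⟪y n, g⟫_ℂ) ⟪f, g⟫_ℂ ∧
        HasSum (fun n => ⟪f, y n⟫_ℂ * ⟪x n, g⟫_ℂ) ⟪f, g⟫_ℂ := by
  have hb : ∀ i k : ℕ, ⟪b i, b k⟫_ℂ = if i = k then 1 else 0 :=
    orthonormal_iff_ite.mp b.orthonormal
  -- inner products with x and y
  have hxr : ∀ (i n : ℕ), ⟪b i, x n⟫_ℂ = if i ≤ n then ((i:ℂ)+1)⁻¹ else 0 := by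
    intro i n
    rw [hx, inner_sum]
    simp only [inner_smul_right, hb, mul_ite, mul_one, mul_zero,
      Finset.sum_ite_eq (Finset.range (n+1)) i, Finset.mem_range, Nat.lt_succ_iff]
  have hxl : ∀ (j n : ℕ), ⟪x n, b j⟫_ℂ = if j ≤ n then ((j:ℂ)+1)⁻¹ else 0 := by
    intro j n
    rw [← inner_conj_symm, hxr]
    split <;> simp
  have hyr : ∀ (i n : ℕ),
      ⟪b i, y n⟫_ℂ = ((n:ℂ)+1) * (if i = n then 1 else 0)
        - ((n:ℂ)+2) * (if i = n+1 then 1 else 0) := by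
    intro i n
    rw [hy, inner_sub_right, inner_smul_right, inner_smul_right, hb, hb]
  have hyl : ∀ (j n : ℕ),
      ⟪y n, b j⟫_ℂ = ((n:ℂ)+1) * (if n = j then 1 else 0)
        - ((n:ℂ)+2) * (if n+1 = j then 1 else 0) := by
    intro j n
    rw [← inner_conj_symm, hyr]
    by_cases h1 : j = n <;> by_cases h2 : j = n + 1 <;>
      simp [h1, h2, eq_comm, map_sub, map_mul, map_ofNat]
  -- base case for both sums
  have base1 : ∀ i j : ℕ, HasSum (fun n => ⟪b i, x n⟫_ℂ * ⟪y n, b j⟫_ℂ) ⟪b i, b j⟫_ℂ := by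
    intro i j
    have h := key5 i j
    rw [hb]
    refine h.congr_fun fun n => ?_
    rw [hxr, hyl]
  have base2 : ∀ i j : ℕ, HasSum (fun n => ⟪b i, y n⟫_ℂ * ⟪x n, b j⟫_ℂ) ⟪b i, b j⟫_ℂ := by
    intro i j
    have h := key5 j i
    rw [hb]
    have hij : (if j = i then (1:ℂ) else 0) = if i = j then 1 else 0 := by
      by_cases hc : i = j <;> simp [hc, Ne.symm, eq_comm]
    rw [hij] at h
    refine h.congr_fun fun n => ?_
    rw [hxl, hyr]
    by_cases h1 : i = n <;> by_cases h2 : i = n+1 <;>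
      simp [h1, h2, eq_comm] <;> ring
  -- linearity extension
  intro f hf g hg
  constructor
  · induction hf using Submodule.span_induction with
    | mem f hfm =>
      obtain ⟨i, rfl⟩ := hfm
      induction hg using Submodule.span_induction with
      | mem g hgm => obtain ⟨j, rfl⟩ := hgm; exact base1 i j
      | zero => simpa using hasSum_zero
      | add g₁ g₂ _ _ h₁ h₂ =>
        simpa [inner_add_right, mul_add] using h₁.add h₂
      | smul c g _ h =>
        simpa [inner_smul_right, mul_left_comm] using h.mul_left c
    | zero => simpa using hasSum_zero
    | add f₁ f₂ _ _ h₁ h₂ =>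
      simpa [inner_add_left, add_mul] using h₁.add h₂
    | smul c f _ h =>
      simpa [inner_smul_left, mul_assoc, mul_left_comm, mul_comm] using h.mul_left (starRingEnd ℂ c)
  · induction hf using Submodule.span_induction with
    | mem f hfm =>
      obtain ⟨i, rfl⟩ := hfm
      induction hg using Submodule.span_induction with
      | mem g hgm => obtain ⟨j, rfl⟩ := hgm; exact base2 i j
      | zero => simpa using hasSum_zero
      | add g₁ g₂ _ _ h₁ h₂ =>
        simpa [inner_add_right, mul_add] using h₁.add h₂
      | smul c g _ h =>
        simpa [inner_smul_right, mul_left_comm] using h.mul_left c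
    | zero => simpa using hasSum_zero
    | add f₁ f₂ _ _ h₁ h₂ =>
      simpa [inner_add_left, add_mul] using h₁.add h₂
    | smul c f _ h =>
      simpa [inner_smul_left, mul_assoc, mul_left_comm, mul_comm] using h.mul_left (starRingEnd ℂ c)
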